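/- Let T ∈ ℕ, let (L_t)_{t=1}^T be probability measures on [0,1]², and let γ̂ and φ be probability measures on [0,1]². Suppose B ≥ 0 and B' > 0 are such that Σ_{t=1}^T ∫∫ Rev(p,q,s,b) dγ̂(p,q) dL_t(s,b) ≥ −B and Σ_{t=1}^T ∫∫ Rev(p,q,s,b) dφ(p,q) dL_t(s,b) ≥ B'. Set θ := B/(B + B') and let π := (1 − θ)·γ̂ + θ·φ be the mixture measure. Then π is a probability measure satisfying Σ_{t=1}^T ∫∫ Rev(p,q,s,b) dπ(p,q) dL_t(s,b) ≥ 0 and Σ_{t=1}^T ∫∫ GFT(p,q,s,b) dπ(p,q) dL_t(s,b) ≥ Σ_{t=1}^T ∫∫ GFT(p,q,s,b) dγ̂(p,q) dL_t(s,b) − θ·T. -/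

import Mathlib

open MeasureTheory

/-- Gain from trade. -/
noncomputable def GFT (p q s b : ℝ) : ℝ := (b - s) * (if s ≤ p ∧ q ≤ b then 1 else 0)

/-- Revenue. -/
noncomputable def Rev (p q s b : ℝ) : ℝ := (q - p) * (if s ≤ p ∧ q ≤ b then 1 else 0)
namespace Stmt9Aux

def Box : Set (ℝ × ℝ) := Set.Icc (0:ℝ) 1 ×ˢ Set.Icc (0:ℝ) 1

lemma meas_set : MeasurableSet {z : (ℝ×ℝ)×(ℝ×ℝ) | z.2.1 ≤ z.1.1 ∧ z.1.2 ≤ z.2.2} :=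
  (measurableSet_le (measurable_fst.comp measurable_snd) (measurable_fst.comp measurable_fst)).inter
    (measurableSet_le (measurable_snd.comp measurable_fst) (measurable_snd.comp measurable_snd))

lemma meas_Rev : Measurable (fun z : (ℝ×ℝ)×(ℝ×ℝ) => Rev z.1.1 z.1.2 z.2.1 z.2.2) := by
  unfold Rev
  exact ((measurable_snd.comp measurable_fst).sub (measurable_fst.comp measurable_fst)).mul
    (Measurable.ite meas_set measurable_const measurable_const)

lemma meas_GFT : Measurable (fun z : (ℝ×ℝ)×(ℝ×ℝ) => GFT z.1.1 z.1.2 z.2.1 z.2.2) := by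
  unfold GFT
  exact ((measurable_snd.comp measurable_snd).sub (measurable_fst.comp measurable_snd)).mul
    (Measurable.ite meas_set measurable_const measurable_const)

lemma Rev_le_GFT (p q s b : ℝ) : Rev p q s b ≤ GFT p q s b := by
  unfold Rev GFT
  by_cases h : s ≤ p ∧ q ≤ b
  · simp [h]; linarith [h.1, h.2]
  · simp [h]

lemma abs_Rev_le (x y : ℝ × ℝ) (hx : x ∈ Box) : |Rev x.1 x.2 y.1 y.2| ≤ 1 := by
  obtain ⟨⟨h1, h2⟩, ⟨h3, h4⟩⟩ := hx
  unfold Rev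
  by_cases h : y.1 ≤ x.1 ∧ x.2 ≤ y.2
  · simp [h]; rw [abs_le]; constructor <;> linarith
  · simp [h]

lemma abs_GFT_le (x y : ℝ × ℝ) (hy : y ∈ Box) : |GFT x.1 x.2 y.1 y.2| ≤ 1 := by
  obtain ⟨⟨h1, h2⟩, ⟨h3, h4⟩⟩ := hy
  unfold GFT
  by_cases h : y.1 ≤ x.1 ∧ x.2 ≤ y.2
  · simp [h]; rw [abs_le]; constructor <;> linarith
  · simp [h]

lemma ae_Box {μ : Measure (ℝ × ℝ)} (h : μ Boxᶜ = 0) : ∀ᵐ x ∂μ, x ∈ Box := by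
  rw [ae_iff]; exact h

lemma sm_gR (ν : Measure (ℝ×ℝ)) [SFinite ν] :
    StronglyMeasurable (fun x : ℝ×ℝ => ∫ y, Rev x.1 x.2 y.1 y.2 ∂ν) :=
  meas_Rev.stronglyMeasurable.integral_prod_right'

lemma sm_gG (ν : Measure (ℝ×ℝ)) [SFinite ν] :
    StronglyMeasurable (fun x : ℝ×ℝ => ∫ y, GFT x.1 x.2 y.1 y.2 ∂ν) :=
  meas_GFT.stronglyMeasurable.integral_prod_right'

lemma int_inner_Rev (ν : Measure (ℝ×ℝ)) [IsProbabilityMeasure ν] (x : ℝ×ℝ) (hx : x ∈ Box) :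
    Integrable (fun y => Rev x.1 x.2 y.1 y.2) ν :=
  (integrable_const (1:ℝ)).mono'
    ((meas_Rev.comp measurable_prodMk_left).aestronglyMeasurable)
    (Filter.Eventually.of_forall fun y => by simpa using abs_Rev_le x y hx)

lemma int_inner_GFT (ν : Measure (ℝ×ℝ)) [IsProbabilityMeasure ν] (hν : ν Boxᶜ = 0) (x : ℝ×ℝ) :
    Integrable (fun y => GFT x.1 x.2 y.1 y.2) ν :=
  (integrable_const (1:ℝ)).mono'
    ((meas_GFT.comp measurable_prodMk_left).aestronglyMeasurable)
    ((ae_Box hν).mono fun y hy => by simpa using abs_GFT_le x y hy)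

lemma norm_inner_Rev_le (ν : Measure (ℝ×ℝ)) [IsProbabilityMeasure ν] (x : ℝ×ℝ) (hx : x ∈ Box) :
    ‖∫ y, Rev x.1 x.2 y.1 y.2 ∂ν‖ ≤ 1 := by
  calc ‖∫ y, Rev x.1 x.2 y.1 y.2 ∂ν‖ ≤ 1 * (ν Set.univ).toReal :=
        norm_integral_le_of_norm_le_const (Filter.Eventually.of_forall fun y => by
          simpa using abs_Rev_le x y hx)
    _ = 1 := by simp

lemma norm_inner_GFT_le (ν : Measure (ℝ×ℝ)) [IsProbabilityMeasure ν] (hν : ν Boxᶜ = 0) (x : ℝ×ℝ) :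
    ‖∫ y, GFT x.1 x.2 y.1 y.2 ∂ν‖ ≤ 1 := by
  calc ‖∫ y, GFT x.1 x.2 y.1 y.2 ∂ν‖ ≤ 1 * (ν Set.univ).toReal :=
        norm_integral_le_of_norm_le_const ((ae_Box hν).mono fun y hy => by
          simpa using abs_GFT_le x y hy)
    _ = 1 := by simp

lemma int_outer_Rev (ν μ : Measure (ℝ×ℝ)) [IsProbabilityMeasure ν] [IsProbabilityMeasure μ]
    (hμ : μ Boxᶜ = 0) :
    Integrable (fun x : ℝ×ℝ => ∫ y, Rev x.1 x.2 y.1 y.2 ∂ν) μ :=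
  (integrable_const (1:ℝ)).mono' (sm_gR ν).aestronglyMeasurable
    ((ae_Box hμ).mono fun x hx => norm_inner_Rev_le ν x hx)

lemma int_outer_GFT (ν μ : Measure (ℝ×ℝ)) [IsProbabilityMeasure ν] [IsProbabilityMeasure μ]
    (hν : ν Boxᶜ = 0) (hμ : μ Boxᶜ = 0) :
    Integrable (fun x : ℝ×ℝ => ∫ y, GFT x.1 x.2 y.1 y.2 ∂ν) μ :=
  (integrable_const (1:ℝ)).mono' (sm_gG ν).aestronglyMeasurable
    ((ae_Box hμ).mono fun x _ => norm_inner_GFT_le ν hν x)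

lemma outer_GFT_le_one (ν μ : Measure (ℝ×ℝ)) [IsProbabilityMeasure ν] [IsProbabilityMeasure μ]
    (hν : ν Boxᶜ = 0) :
    (∫ x, (∫ y, GFT x.1 x.2 y.1 y.2 ∂ν) ∂μ) ≤ 1 := by
  have := calc ‖∫ x, (∫ y, GFT x.1 x.2 y.1 y.2 ∂ν) ∂μ‖ ≤ 1 * (μ Set.univ).toReal :=
        norm_integral_le_of_norm_le_const (Filter.Eventually.of_forall fun x =>
          norm_inner_GFT_le ν hν x)
    _ = 1 := by simp
  exact le_trans (le_abs_self _) this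

lemma outer_Rev_le_GFT (ν μ : Measure (ℝ×ℝ)) [IsProbabilityMeasure ν] [IsProbabilityMeasure μ]
    (hν : ν Boxᶜ = 0) (hμ : μ Boxᶜ = 0) :
    (∫ x, (∫ y, Rev x.1 x.2 y.1 y.2 ∂ν) ∂μ) ≤ ∫ x, (∫ y, GFT x.1 x.2 y.1 y.2 ∂ν) ∂μ := by
  refine integral_mono_ae (int_outer_Rev ν μ hμ) (int_outer_GFT ν μ hν hμ)
    ((ae_Box hμ).mono fun x hx => ?_)
  exact integral_mono (int_inner_Rev ν x hx) (int_inner_GFT ν hν x)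
    (fun y => Rev_le_GFT _ _ _ _)

end Stmt9Aux

open Stmt9Aux in
theorem stmt9 (T : ℕ) (L : Fin T → Measure (ℝ × ℝ)) [∀ t, IsProbabilityMeasure (L t)]
    (hLsupp : ∀ t, (L t) ((Set.Icc (0:ℝ) 1 ×ˢ Set.Icc (0:ℝ) 1)ᶜ) = 0)
    (γhat φ : Measure (ℝ × ℝ)) [IsProbabilityMeasure γhat] [IsProbabilityMeasure φ]
    (hγsupp : γhat ((Set.Icc (0:ℝ) 1 ×ˢ Set.Icc (0:ℝ) 1)ᶜ) = 0)
    (hφsupp : φ ((Set.Icc (0:ℝ) 1 ×ˢ Set.Icc (0:ℝ) 1)ᶜ) = 0)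
    (B B' : ℝ) (hB : 0 ≤ B) (hB' : 0 < B')
    (hγrev : ∑ t, ∫ x, (∫ y, Rev x.1 x.2 y.1 y.2 ∂(L t)) ∂γhat ≥ -B)
    (hφrev : ∑ t, ∫ x, (∫ y, Rev x.1 x.2 y.1 y.2 ∂(L t)) ∂φ ≥ B')
    (θ : ℝ) (hθ : θ = B / (B + B'))
    (π : Measure (ℝ × ℝ))
    (hπ : π = ENNReal.ofReal (1 - θ) • γhat + ENNReal.ofReal θ • φ) :
    IsProbabilityMeasure π ∧
    (∑ t, ∫ x, (∫ y, Rev x.1 x.2 y.1 y.2 ∂(L t)) ∂π ≥ 0) ∧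
    (∑ t, ∫ x, (∫ y, GFT x.1 x.2 y.1 y.2 ∂(L t)) ∂π ≥
      (∑ t, ∫ x, (∫ y, GFT x.1 x.2 y.1 y.2 ∂(L t)) ∂γhat) - θ * T) := by
  have hBB' : 0 < B + B' := by linarith
  have hθ0 : 0 ≤ θ := hθ ▸ div_nonneg hB hBB'.le
  have hθ1 : θ ≤ 1 := by rw [hθ, div_le_one hBB']; linarith
  have h1θ : 0 ≤ 1 - θ := by linarith
  have hθB : θ * (B + B') = B := by rw [hθ]; field_simp
  have hγB : γhat Boxᶜ = 0 := hγsupp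
  have hφB : φ Boxᶜ = 0 := hφsupp
  have hLB : ∀ t, (L t) Boxᶜ = 0 := hLsupp
  have hprob : IsProbabilityMeasure π := by
    constructor
    rw [hπ]
    simp only [Measure.add_apply, Measure.smul_apply, measure_univ, smul_eq_mul, mul_one]
    rw [← ENNReal.ofReal_add h1θ hθ0]
    norm_num
  have hdec : ∀ g : (ℝ×ℝ) → ℝ, Integrable g γhat → Integrable g φ →
      ∫ x, g x ∂π = (1-θ) * ∫ x, g x ∂γhat + θ * ∫ x, g x ∂φ := by
    intro g hg1 hg2
    rw [hπ, integral_add_measure (hg1.smul_measure ENNReal.ofReal_ne_top)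
      (hg2.smul_measure ENNReal.ofReal_ne_top),
      integral_smul_measure, integral_smul_measure,
      ENNReal.toReal_ofReal h1θ, ENNReal.toReal_ofReal hθ0, smul_eq_mul, smul_eq_mul]
  refine ⟨hprob, ?_, ?_⟩
  · have hd : ∑ t, ∫ x, (∫ y, Rev x.1 x.2 y.1 y.2 ∂(L t)) ∂π =
        (1-θ) * (∑ t, ∫ x, (∫ y, Rev x.1 x.2 y.1 y.2 ∂(L t)) ∂γhat)
        + θ * (∑ t, ∫ x, (∫ y, Rev x.1 x.2 y.1 y.2 ∂(L t)) ∂φ) := by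
      rw [Finset.mul_sum, Finset.mul_sum, ← Finset.sum_add_distrib]
      exact Finset.sum_congr rfl fun t _ =>
        hdec _ (int_outer_Rev (L t) γhat hγB) (int_outer_Rev (L t) φ hφB)
    rw [ge_iff_le, hd]
    have h1 : (1-θ) * (-B) ≤ (1-θ) * (∑ t, ∫ x, (∫ y, Rev x.1 x.2 y.1 y.2 ∂(L t)) ∂γhat) :=
      mul_le_mul_of_nonneg_left hγrev h1θ
    have h2 : θ * B' ≤ θ * (∑ t, ∫ x, (∫ y, Rev x.1 x.2 y.1 y.2 ∂(L t)) ∂φ) :=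
      mul_le_mul_of_nonneg_left hφrev hθ0
    have key : (1-θ) * (-B) + θ * B' = 0 := by linear_combination hθB
    linarith
  · have hd : ∑ t, ∫ x, (∫ y, GFT x.1 x.2 y.1 y.2 ∂(L t)) ∂π =
        (1-θ) * (∑ t, ∫ x, (∫ y, GFT x.1 x.2 y.1 y.2 ∂(L t)) ∂γhat)
        + θ * (∑ t, ∫ x, (∫ y, GFT x.1 x.2 y.1 y.2 ∂(L t)) ∂φ) := by
      rw [Finset.mul_sum, Finset.mul_sum, ← Finset.sum_add_distrib]
      exact Finset.sum_congr rfl fun t _ =>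
        hdec _ (int_outer_GFT (L t) γhat (hLB t) hγB) (int_outer_GFT (L t) φ (hLB t) hφB)
    rw [ge_iff_le, hd]
    have hφG : B' ≤ ∑ t, ∫ x, (∫ y, GFT x.1 x.2 y.1 y.2 ∂(L t)) ∂φ :=
      le_trans hφrev (Finset.sum_le_sum fun t _ => outer_Rev_le_GFT (L t) φ (hLB t) hφB)
    have hγG : (∑ t, ∫ x, (∫ y, GFT x.1 x.2 y.1 y.2 ∂(L t)) ∂γhat) ≤ (T:ℝ) := by
      calc (∑ t, ∫ x, (∫ y, GFT x.1 x.2 y.1 y.2 ∂(L t)) ∂γhat) ≤ ∑ _t : Fin T, (1:ℝ) :=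
            Finset.sum_le_sum fun t _ => outer_GFT_le_one (L t) γhat (hLB t)
        _ = (T:ℝ) := by simp
    nlinarith [mul_nonneg hθ0 (sub_nonneg.mpr hγG),
      mul_nonneg hθ0 (le_trans hB'.le hφG)]
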